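/- Let A > 0 and B > 0 be real numbers with A ≠ 1. If t is any real number with t ≠ 0 satisfying A t³ + (B² − A² − 1) t² − 4 B² = 0, then t − 2/t ≠ A and t − 2/t ≠ 1/A. -/
import Mathlib


/-- If `A, B > 0`, `A ≠ 1` and `t ≠ 0` satisfies
`A t³ + (B² − A² − 1) t² − 4 B² = 0`, then `t − 2/t ≠ A` and `t − 2/t ≠ 1/A`. -/
theorem cubic_root_excludes_A_and_invA (A B t : ℝ)
    (hA : 0 < A) (hA1 : A ≠ 1) (hB : 0 < B) (ht : t ≠ 0)
    (hroot : A * t ^ 3 + (B ^ 2 - A ^ 2 - 1) * t ^ 2 - 4 * B ^ 2 = 0) :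
    t - 2 / t ≠ A ∧ t - 2 / t ≠ 1 / A := by
  have hBp : (0:ℝ) < B ^ 2 + 1 := by positivity
  have hAB : (0:ℝ) < A ^ 2 + B ^ 2 := by positivity
  constructor
  · intro heq
    have h2 : t ^ 2 - A * t - 2 = 0 := by
      field_simp at heq
      linarith
    have h3 : A * (B ^ 2 + 1) * t - 2 * (B ^ 2 + 1) = 0 := by
      linear_combination hroot - (A * t + B ^ 2 - 1) * h2
    have ht2 : A * t = 2 := by
      have : (B ^ 2 + 1) * (A * t - 2) = 0 := by linarith [h3]; 
      rcases mul_eq_zero.mp this with h | h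
      · linarith
      · linarith
    have hA2 : (A - 1) * (A + 1) = 0 := by nlinarith [h2, ht2]
    rcases mul_eq_zero.mp hA2 with h | h
    · exact hA1 (by linarith)
    · linarith
  · intro heq
    have h2 : A * t ^ 2 - t - 2 * A = 0 := by
      field_simp at heq
      linarith
    have h3 : (A ^ 2 + B ^ 2) * t - 2 * A * (A ^ 2 + B ^ 2) = 0 := by
      linear_combination A * hroot - (A * t + B ^ 2 - A ^ 2) * h2
    have ht2 : t = 2 * A := by
      have : (A ^ 2 + B ^ 2) * (t - 2 * A) = 0 := by linarith [h3]
      rcases mul_eq_zero.mp this with h | h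
      · linarith
      · linarith
    have hA2 : (A - 1) * (A + 1) = 0 := by nlinarith [h2, ht2]
    rcases mul_eq_zero.mp hA2 with h | h
    · exact hA1 (by linarith)
    · linarith
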